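/- Let T ∈ R^k and S ∈ R^d be random vectors with finite second moments, E[S S'] invertible, and set G = E[T S'] (a k×d matrix). If the equality E[T T'] = G (E[S S'])^{-1} G' holds, then for every x ∈ R^k, the real random variable x'T lies almost surely in the linear span of the components S_1, …, S_d of S. -/

import Mathlib

open MeasureTheory Matrix

private lemma mul_integrable_of_memL2 {Ω : Type*} [MeasurableSpace Ω] {μ : Measure Ω}
    {f g : Ω → ℝ} (hf : MemLp f 2 μ) (hg : MemLp g 2 μ) :
    Integrable (fun ω => f ω * g ω) μ := by
  have h : MemLp (f • g) 1 μ := hg.smul hf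
  exact memLp_one_iff_integrable.mp h

private lemma memL2_dot {Ω : Type*} [MeasurableSpace Ω] {μ : Measure Ω}
    {n : ℕ} {T : Ω → Fin n → ℝ} (hT : ∀ i, MemLp (fun ω => T ω i) 2 μ)
    (x : Fin n → ℝ) : MemLp (fun ω => x ⬝ᵥ T ω) 2 μ := by
  have : MemLp (fun ω => ∑ i, x i * T ω i) 2 μ := by
    exact memLp_finset_sum Finset.univ fun i _ => (hT i).const_mul (x i)
  simpa [dotProduct] using this

private lemma integral_dot_mul_dot {Ω : Type*} [MeasurableSpace Ω] (μ : Measure Ω)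
    {m n : ℕ} {T : Ω → Fin m → ℝ} {S : Ω → Fin n → ℝ}
    (hT : ∀ i, MemLp (fun ω => T ω i) 2 μ) (hS : ∀ j, MemLp (fun ω => S ω j) 2 μ)
    (x : Fin m → ℝ) (c : Fin n → ℝ) :
    ∫ ω, (x ⬝ᵥ T ω) * (c ⬝ᵥ S ω) ∂μ
      = ∑ i, ∑ j, x i * c j * ∫ ω, T ω i * S ω j ∂μ := by
  have key : ∀ ω, (x ⬝ᵥ T ω) * (c ⬝ᵥ S ω)
      = ∑ i, ∑ j, x i * c j * (T ω i * S ω j) := by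
    intro ω
    simp only [dotProduct, Finset.sum_mul_sum]
    refine Finset.sum_congr rfl fun i _ => Finset.sum_congr rfl fun j _ => by ring
  simp_rw [key]
  rw [integral_finset_sum]
  · refine Finset.sum_congr rfl fun i _ => ?_
    rw [integral_finset_sum]
    · exact Finset.sum_congr rfl fun j _ => by
        rw [integral_const_mul]
    · intro j _
      exact (mul_integrable_of_memL2 (hT i) (hS j)).const_mul _
  · intro i _
    apply integrable_finset_sum
    intro j _
    exact (mul_integrable_of_memL2 (hT i) (hS j)).const_mul _

theorem equality_implies_span
    {Ω : Type*} [MeasurableSpace Ω] (μ : Measure Ω) [IsProbabilityMeasure μ]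
    {k d : ℕ} (T : Ω → Fin k → ℝ) (S : Ω → Fin d → ℝ)
    (hT : ∀ i, MemLp (fun ω => T ω i) 2 μ)
    (hS : ∀ j, MemLp (fun ω => S ω j) 2 μ)
    (ESS : Matrix (Fin d) (Fin d) ℝ) (hESS : ∀ i j, ESS i j = ∫ ω, S ω i * S ω j ∂μ)
    (hinv : IsUnit ESS)
    (G : Matrix (Fin k) (Fin d) ℝ) (hG : ∀ i j, G i j = ∫ ω, T ω i * S ω j ∂μ)
    (ETT : Matrix (Fin k) (Fin k) ℝ) (hETT : ∀ i j, ETT i j = ∫ ω, T ω i * T ω j ∂μ)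
    (heq : ETT = G * ESS⁻¹ * Gᵀ) :
    ∀ x : Fin k → ℝ, ∃ c : Fin d → ℝ, ∀ᵐ ω ∂μ, x ⬝ᵥ T ω = c ⬝ᵥ S ω := by
  intro x
  set w : Fin d → ℝ := Gᵀ *ᵥ x with hw
  set c : Fin d → ℝ := ESS⁻¹ *ᵥ w with hc
  refine ⟨c, ?_⟩
  set f : Ω → ℝ := fun ω => x ⬝ᵥ T ω with hfdef
  set g : Ω → ℝ := fun ω => c ⬝ᵥ S ω with hgdef
  set A : ℝ := x ⬝ᵥ (ETT *ᵥ x) with hA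
  have hdetu : IsUnit ESS.det := (Matrix.isUnit_iff_isUnit_det ESS).mp hinv
  -- matrix facts
  have hGc : G *ᵥ c = ETT *ᵥ x := by
    rw [hc, hw, heq, Matrix.mulVec_mulVec, Matrix.mulVec_mulVec]
  have hEc : ESS *ᵥ c = w := by
    rw [hc, Matrix.mulVec_mulVec, Matrix.mul_nonsing_inv ESS hdetu, Matrix.one_mulVec]
  -- integral of f*f
  have hff : ∫ ω, f ω * f ω ∂μ = A := by
    rw [hfdef]
    rw [integral_dot_mul_dot μ hT hT x x]
    rw [hA]
    simp only [dotProduct, Matrix.mulVec, hETT, Finset.mul_sum]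
    refine Finset.sum_congr rfl fun i _ => Finset.sum_congr rfl fun j _ => by ring
  -- integral of f*g
  have hfg : ∫ ω, f ω * g ω ∂μ = A := by
    rw [hfdef, hgdef]
    rw [integral_dot_mul_dot μ hT hS x c]
    have h1 : ∑ i, ∑ j, x i * c j * ∫ ω, T ω i * S ω j ∂μ = x ⬝ᵥ (G *ᵥ c) := by
      simp only [dotProduct, Matrix.mulVec, hG, Finset.mul_sum]
      refine Finset.sum_congr rfl fun i _ => Finset.sum_congr rfl fun j _ => by ring
    rw [h1, hGc, hA]
  -- integral of g*g
  have hgg : ∫ ω, g ω * g ω ∂μ = A := by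
    rw [hgdef]
    rw [integral_dot_mul_dot μ hS hS c c]
    have h1 : ∑ i, ∑ j, c i * c j * ∫ ω, S ω i * S ω j ∂μ = c ⬝ᵥ (ESS *ᵥ c) := by
      simp only [dotProduct, Matrix.mulVec, hESS, Finset.mul_sum]
      refine Finset.sum_congr rfl fun i _ => Finset.sum_congr rfl fun j _ => by ring
    rw [h1, hEc]
    -- c ⬝ᵥ w = A
    have h2 : x ⬝ᵥ (ETT *ᵥ x) = w ⬝ᵥ c := by
      rw [← hGc, Matrix.dotProduct_mulVec, hw, Matrix.mulVec_transpose]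
    rw [hA, h2, dotProduct_comm]
  -- L2 membership
  have hf2 : MemLp f 2 μ := memL2_dot hT x
  have hg2 : MemLp g 2 μ := memL2_dot hS c
  have hfgi : Integrable (fun ω => f ω * g ω) μ := mul_integrable_of_memL2 hf2 hg2
  have hffi : Integrable (fun ω => f ω * f ω) μ := mul_integrable_of_memL2 hf2 hf2
  have hggi : Integrable (fun ω => g ω * g ω) μ := mul_integrable_of_memL2 hg2 hg2
  have hzero : ∫ ω, (f ω - g ω) ^ 2 ∂μ = 0 := by
    have e : (fun ω => (f ω - g ω) ^ 2)
        = fun ω => f ω * f ω - 2 * (f ω * g ω) + g ω * g ω := by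
      funext ω; ring
    rw [e, integral_add (by exact (hffi.sub (hfgi.const_mul 2))) hggi,
      integral_sub hffi (hfgi.const_mul 2), integral_const_mul, hff, hfg, hgg]
    ring
  have hsq : (fun ω => (f ω - g ω) ^ 2) =ᵐ[μ] 0 := by
    have hint : Integrable (fun ω => (f ω - g ω) ^ 2) μ := (hf2.sub hg2).integrable_sq
    exact (integral_eq_zero_iff_of_nonneg (fun ω => sq_nonneg _) hint).mp hzero
  filter_upwards [hsq] with ω hω
  have : (f ω - g ω) ^ 2 = 0 := hω
  have := pow_eq_zero_iff (n := 2) (by norm_num) |>.mp this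
  have : f ω = g ω := by linarith [sub_eq_zero.mp this]
  simpa [hfdef, hgdef] using this
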